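/- arXiv:2208.00144 — 2 statements merged into one kernel-verified Lean document; each statement's English description precedes it below -/
import Mathlib

section
/- Let G be a group, X a Hausdorff locally compact paracompact space, φ : G ↷ X a properly discontinuous action by homeomorphisms and x₀ ∈ X. Then the map φ_{x₀} : (G, ε_G) → (X, ε_φ) defined by φ_{x₀}(g) = φ(g, x₀) is a coarse embedding. -/
namespace Paper

open Set Topology

/-! ### Coarse structures -/

/-- The inverse of a relation `e ⊆ X × X`. -/
def invRel {X : Type*} (e : Set (X × X)) : Set (X × X) := {p | (p.2, p.1) ∈ e}

/-- The composition of relations: `compRel e e' = {(a,b) | ∃ c, (a,c) ∈ e ∧ (c,b) ∈ e'}`.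
This is `e' ∘ e` in the paper's notation. -/
def compRel {X : Type*} (e e' : Set (X × X)) : Set (X × X) :=
  {p | ∃ c, (p.1, c) ∈ e ∧ (c, p.2) ∈ e'}

/-- A coarse structure on a set `X`. -/
def IsCoarseStructure {X : Type*} (ε : Set (Set (X × X))) : Prop :=
  Set.diagonal X ∈ ε ∧
  (∀ e ∈ ε, ∀ e' : Set (X × X), e' ⊆ e → e' ∈ ε) ∧
  (∀ e ∈ ε, ∀ e' ∈ ε, e ∪ e' ∈ ε) ∧
  (∀ e ∈ ε, invRel e ∈ ε) ∧
  (∀ e ∈ ε, ∀ e' ∈ ε, compRel e e' ∈ ε)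

/-- The coarse structure generated by a family `A` of subsets of `X × X`:
the intersection of all coarse structures containing `A`. -/
def genCoarse {X : Type*} (A : Set (Set (X × X))) : Set (Set (X × X)) :=
  ⋂₀ {ε | IsCoarseStructure ε ∧ A ⊆ ε}

/-- The `u`-neighbourhood `𝔅(B, u)` of a subset `B`. -/
def Bnh {X : Type*} (B : Set X) (u : Set (X × X)) : Set X := {x | ∃ y ∈ B, (x, y) ∈ u}

/-- A subset `B` is bounded for the coarse structure `ε` if `B × B ∈ ε`. -/
def CBounded {X : Type*} (ε : Set (Set (X × X))) (B : Set X) : Prop := B ×ˢ B ∈ ε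

/-- A map is bornologous if it sends entourages to entourages. -/
def Bornologous {X Y : Type*} (ε : Set (Set (X × X))) (ζ : Set (Set (Y × Y)))
    (f : X → Y) : Prop :=
  ∀ e ∈ ε, Prod.map f f '' e ∈ ζ

/-- A map is (coarsely) proper if preimages of bounded sets are bounded. -/
def CProper {X Y : Type*} (ε : Set (Set (X × X))) (ζ : Set (Set (Y × Y)))
    (f : X → Y) : Prop :=
  ∀ B : Set Y, CBounded ζ B → CBounded ε (f ⁻¹' B)

/-- A coarse map is a proper bornologous map. -/
def CoarseMap {X Y : Type*} (ε : Set (Set (X × X))) (ζ : Set (Set (Y × Y)))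
    (f : X → Y) : Prop :=
  Bornologous ε ζ f ∧ CProper ε ζ f

/-- Two maps `f g : S → X` are close if `{(f s, g s) | s ∈ S}` is an entourage. -/
def Close {S X : Type*} (ε : Set (Set (X × X))) (f g : S → X) : Prop :=
  Set.range (fun s => (f s, g s)) ∈ ε

/-- A coarse equivalence: a coarse map with a coarse quasi-inverse. -/
def CoarseEquiv {X Y : Type*} (ε : Set (Set (X × X))) (ζ : Set (Set (Y × Y)))
    (f : X → Y) : Prop :=
  CoarseMap ε ζ f ∧
    ∃ g : Y → X, CoarseMap ζ ε g ∧ Close ζ (f ∘ g) id ∧ Close ε (g ∘ f) id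

/-- The subspace coarse structure on `A ⊆ Y`. -/
def SubCoarse {Y : Type*} (ζ : Set (Set (Y × Y))) (A : Set Y) : Set (Set (↥A × ↥A)) :=
  {e | Prod.map (Subtype.val : A → Y) (Subtype.val : A → Y) '' e ∈ ζ}

/-- A coarse embedding: a coarse map which is a coarse equivalence onto its image with
the subspace coarse structure. -/
def CoarseEmbedding {X Y : Type*} (ε : Set (Set (X × X))) (ζ : Set (Set (Y × Y)))
    (f : X → Y) : Prop :=
  CoarseMap ε ζ f ∧ CoarseEquiv ε (SubCoarse ζ (Set.range f)) (Set.rangeFactorization f)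

/-- A coarse space is coarsely connected if every pair lies in some entourage. -/
def CoarselyConnected {X : Type*} (ε : Set (Set (X × X))) : Prop :=
  ∀ x y : X, ∃ e ∈ ε, (x, y) ∈ e

/-- `A` is quasi-dense if `𝔅(A, e) = X` for some entourage `e`. -/
def QuasiDense {X : Type*} (ε : Set (Set (X × X))) (A : Set X) : Prop :=
  ∃ e ∈ ε, Bnh A e = Set.univ

/-- A subset of a topological space is topologically bounded if its closure is compact. -/
def TopBounded {X : Type*} [TopologicalSpace X] (B : Set X) : Prop := IsCompact (closure B)

/-- A coarse structure on a topological space is proper if it contains a neighbourhood of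
the diagonal and every bounded set is topologically bounded. -/
def ProperCoarse {X : Type*} [TopologicalSpace X] (ε : Set (Set (X × X))) : Prop :=
  (∃ e ∈ ε, e ∈ nhdsSet (Set.diagonal X)) ∧ ∀ B : Set X, CBounded ε B → TopBounded B

/-! ### Artin–Wraith glueings -/

/-- An admissible map `f : Closed(X) → Closed(Y)`. -/
def Admissible {X Y : Type*} [TopologicalSpace X] [TopologicalSpace Y]
    (f : Set X → Set Y) : Prop :=
  (∀ A : Set X, IsClosed A → IsClosed (f A)) ∧
  (∀ A B : Set X, IsClosed A → IsClosed B → f (A ∪ B) = f A ∪ f B) ∧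
  f ∅ = ∅

/-- The closed sets of the Artin–Wraith glueing `X +_f Y`. -/
def AWClosed {X Y : Type*} [TopologicalSpace X] [TopologicalSpace Y]
    (f : Set X → Set Y) : Set (Set (X ⊕ Y)) :=
  {A | IsClosed (Sum.inl ⁻¹' A) ∧ IsClosed (Sum.inr ⁻¹' A) ∧
    Sum.inr '' f (Sum.inl ⁻¹' A) ⊆ A}

/-- The topology of the Artin–Wraith glueing `X +_f Y` on `X ⊕ Y`. (For admissible `f`,
the closed sets of this topology are exactly the members of `AWClosed f`.) -/
def AWTop {X Y : Type*} [TopologicalSpace X] [TopologicalSpace Y]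
    (f : Set X → Set Y) : TopologicalSpace (X ⊕ Y) :=
  TopologicalSpace.generateFrom (compl '' AWClosed f)

/-- `X +_f W` is a (Hausdorff) compactification of `X`: a compact Hausdorff Artin–Wraith
glueing in which `X` is dense. -/
def IsCompactification {X W : Type*} [TopologicalSpace X] [TopologicalSpace W]
    (f : Set X → Set W) : Prop :=
  Admissible f ∧
  @CompactSpace (X ⊕ W) (AWTop f) ∧
  @T2Space (X ⊕ W) (AWTop f) ∧
  @Dense (X ⊕ W) (AWTop f) (Set.range Sum.inl)

/-- A relation `e ⊆ X × X` is proper if `𝔅(B,e)` and `𝔅(B,e⁻¹)` are topologically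
bounded for every topologically bounded `B`. -/
def ProperRel {X : Type*} [TopologicalSpace X] (e : Set (X × X)) : Prop :=
  ∀ B : Set X, TopBounded B → TopBounded (Bnh B e) ∧ TopBounded (Bnh B (invRel e))

/-- `e` is a perspective subset of `X × X` with respect to the compactification `X +_f W`. -/
def PerspRel {X W : Type*} [TopologicalSpace X] [TopologicalSpace W]
    (f : Set X → Set W) (e : Set (X × X)) : Prop :=
  ProperRel e ∧
  ∀ y : W, ∀ V : Set (X ⊕ W), IsOpen[AWTop f] V → Sum.inr y ∈ V →
    ∃ U : Set (X ⊕ W), IsOpen[AWTop f] U ∧ Sum.inr y ∈ U ∧ U ⊆ V ∧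
      ∀ p ∈ e, Sum.inl p.1 ∈ U → Sum.inl p.2 ∈ V

/-- A perspective compactification of the coarse space `(X, ε)`. -/
def PerspCompactification {X W : Type*} [TopologicalSpace X] [TopologicalSpace W]
    (ε : Set (Set (X × X))) (f : Set X → Set W) : Prop :=
  IsCompactification f ∧ ∀ e ∈ ε, PerspRel f e

/-- The pullback of `f : Closed(X) → Closed(W)` with respect to `π : Y → X` and
`ϖ : Z → W`. -/
def pullbackAW {X Y Z W : Type*} [TopologicalSpace X] [TopologicalSpace Z]
    (f : Set X → Set W) (π : Y → X) (ϖ : Z → W) (A : Set Y) : Set Z :=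
  closure (ϖ ⁻¹' (f (closure (π '' A))))

/-! ### Group actions -/

/-- `φ : G → X → X` is an action by homeomorphisms. -/
def IsActionByHomeos {G X : Type*} [Group G] [TopologicalSpace X]
    (φ : G → X → X) : Prop :=
  (∀ g : G, Continuous (φ g)) ∧ (∀ x : X, φ 1 x = x) ∧
    ∀ g h : G, ∀ x : X, φ (g * h) x = φ g (φ h x)

/-- A properly discontinuous action. -/
def ProperlyDisc {G X : Type*} [TopologicalSpace X] (φ : G → X → X) : Prop :=
  ∀ K : Set X, IsCompact K → {g : G | (φ g '' K ∩ K).Nonempty}.Finite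

/-- A cocompact action. -/
def CocompactAct {G X : Type*} [TopologicalSpace X] (φ : G → X → X) : Prop :=
  ∃ K : Set X, IsCompact K ∧ (⋃ g : G, φ g '' K) = Set.univ

/-- The saturation `Sat(A) = {(φ(g,x), φ(g,x')) : g ∈ G, x, x' ∈ A}`. -/
def Sat {G X : Type*} (φ : G → X → X) (A : Set X) : Set (X × X) :=
  {p | ∃ g : G, ∃ x ∈ A, ∃ x' ∈ A, p = (φ g x, φ g x')}

/-- The coarse structure `ε_φ` on `X` generated by the saturations of topologically
bounded sets. -/
def coarseOfAction {G X : Type*} [TopologicalSpace X] (φ : G → X → X) :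
    Set (Set (X × X)) :=
  genCoarse {e | ∃ A : Set X, TopBounded A ∧ e = Sat φ A}

/-- The saturation for the left multiplication action of a group on itself. -/
def SatMul {G : Type*} [Group G] (U : Set G) : Set (G × G) :=
  {p | ∃ g : G, ∃ u ∈ U, ∃ u' ∈ U, p = (g * u, g * u')}

/-- The coarse structure `ε_G` on the group `G`, generated by the saturations of
finite subsets under the left multiplication action. -/
def coarseGroup (G : Type*) [Group G] : Set (Set (G × G)) :=
  genCoarse {e | ∃ U : Set G, U.Finite ∧ e = SatMul U}

/-- The compactification `X +_f W` is group-theoretically perspective with respect to the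
action `φ`. -/
def GTPerspective {G X W : Type*} [TopologicalSpace X] [TopologicalSpace W]
    (φ : G → X → X) (f : Set X → Set W) : Prop :=
  ∀ K : Set X, IsCompact K → ∀ y : W, ∀ U : Set (X ⊕ W),
    IsOpen[AWTop f] U → Sum.inr y ∈ U →
      ∃ V : Set (X ⊕ W), IsOpen[AWTop f] V ∧ Sum.inr y ∈ V ∧ V ⊆ U ∧
        ∀ g : G, (∃ x ∈ K, Sum.inl (φ g x) ∈ V) → ∀ x ∈ K, Sum.inl (φ g x) ∈ U

/-! ### Rays and accessibility -/

/-- A family `Ψ` of rays in `X` based at `p`: each member is a pair `(A, γ)` of a closed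
unbounded subset `A ⊆ [0,∞)` containing `0` and a map `γ : ℝ → X` (regarded on `A`) which
is injective on `A`, proper, and satisfies `γ 0 = p`. -/
def GoodRayFamily {X : Type*} [TopologicalSpace X] (p : X)
    (Ψ : Set (Set ℝ × (ℝ → X))) : Prop :=
  ∀ r ∈ Ψ, r.1 ⊆ Set.Ici (0 : ℝ) ∧ IsClosed r.1 ∧ ¬Bornology.IsBounded r.1 ∧
    (0 : ℝ) ∈ r.1 ∧ r.2 0 = p ∧ Set.InjOn r.2 r.1 ∧
    ∀ B : Set X, TopBounded B → Bornology.IsBounded (r.1 ∩ r.2 ⁻¹' B)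

/-- The compactification `X +_f W` is `Ψ`-accessible. -/
def AccessibleComp {X W : Type*} [TopologicalSpace X] [TopologicalSpace W]
    (f : Set X → Set W) (Ψ : Set (Set ℝ × (ℝ → X))) : Prop :=
  (∀ w : W, ∃ r ∈ Ψ, f (closure (r.2 '' r.1)) = {w}) ∧
  ∀ r ∈ Ψ, ∃ w : W, f (closure (r.2 '' r.1)) = {w}


/-! ### Auxiliary lemmas for Statement 8 -/

section MyAux
set_option linter.unusedSectionVars false

variable {G X : Type*} [Group G] [TopologicalSpace X]

lemma my_sat_mono (φ : G → X → X) {A B : Set X} (h : A ⊆ B) : Sat φ A ⊆ Sat φ B := by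
  rintro p ⟨g, x, hx, x', hx', rfl⟩
  exact ⟨g, x, h hx, x', h hx', rfl⟩

lemma my_mem_gen_union {Y : Type*} {A : Set (Set (Y × Y))} {e g : Set (Y × Y)}
    (hg : g ∈ A) (he : e ⊆ Set.diagonal Y ∪ g) : e ∈ genCoarse A := by
  intro ε hε
  obtain ⟨⟨hdiag, hsub, hunion, _, _⟩, hA⟩ := hε
  exact hsub _ (hunion _ hdiag _ (hA hg)) e he

lemma my_mem_gen_subset {Y : Type*} {A : Set (Set (Y × Y))} {e g : Set (Y × Y)}
    (hg : g ∈ A) (he : e ⊆ g) : e ∈ genCoarse A := by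
  intro ε hε
  exact hε.1.2.1 _ (hε.2 hg) e he

lemma my_genCoarse_subset {Y : Type*} {A : Set (Set (Y × Y))} {ε : Set (Set (Y × Y))}
    (h1 : IsCoarseStructure ε) (h2 : A ⊆ ε) : genCoarse A ⊆ ε :=
  fun _ he => he ε ⟨h1, h2⟩

lemma my_topBounded_finite [T2Space X] {A : Set X} (h : A.Finite) : TopBounded A := by
  have hc : closure A = A := h.isClosed.closure_eq
  rw [TopBounded, hc]; exact h.isCompact

lemma my_topBounded_union {A B : Set X} (hA : TopBounded A) (hB : TopBounded B) :
    TopBounded (A ∪ B) := by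
  rw [TopBounded, closure_union]; exact hA.union hB

lemma my_topBounded_empty [T2Space X] : TopBounded (∅ : Set X) :=
  my_topBounded_finite Set.finite_empty

lemma my_isCoarse_EG :
    IsCoarseStructure {e : Set (G × G) | ∃ U : Set G, U.Finite ∧ e ⊆ SatMul U} := by
  refine ⟨⟨{1}, Set.finite_singleton 1, ?_⟩, ?_, ?_, ?_, ?_⟩
  · rintro ⟨a, b⟩ hab
    have h : a = b := hab
    subst h
    exact ⟨a, 1, rfl, 1, rfl, by simp⟩
  · rintro e ⟨U, hU, he⟩ e' h
    exact ⟨U, hU, h.trans he⟩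
  · rintro e ⟨U, hU, he⟩ e' ⟨V, hV, he'⟩
    refine ⟨U ∪ V, hU.union hV, Set.union_subset ?_ ?_⟩
    · refine he.trans ?_
      rintro p ⟨g, u, hu, u', hu', rfl⟩
      exact ⟨g, u, Or.inl hu, u', Or.inl hu', rfl⟩
    · refine he'.trans ?_
      rintro p ⟨g, u, hu, u', hu', rfl⟩
      exact ⟨g, u, Or.inr hu, u', Or.inr hu', rfl⟩
  · rintro e ⟨U, hU, he⟩
    refine ⟨U, hU, ?_⟩
    rintro ⟨a, b⟩ hab
    obtain ⟨g, u, hu, u', hu', heq⟩ := he hab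
    simp only [Prod.mk.injEq] at heq
    obtain ⟨rfl, rfl⟩ := heq
    exact ⟨g, u', hu', u, hu, rfl⟩
  · rintro e ⟨U, hU, he⟩ e' ⟨V, hV, he'⟩
    refine ⟨U ∪ Set.image2 (· * ·) U (Set.image2 (fun v v' => v⁻¹ * v') V V),
      hU.union (hU.image2 _ (hV.image2 _ hV)), ?_⟩
    rintro ⟨a, b⟩ ⟨c, h1, h2⟩
    obtain ⟨g, u, hu, u₂, hu₂, heq1⟩ := he h1
    obtain ⟨h, v, hv, v', hv', heq2⟩ := he' h2
    simp only [Prod.mk.injEq] at heq1 heq2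
    obtain ⟨rfl, rfl⟩ := heq1
    obtain ⟨hcv, rfl⟩ := heq2
    refine ⟨g, u, Or.inl hu, u₂ * (v⁻¹ * v'),
      Or.inr ⟨u₂, hu₂, v⁻¹ * v', ⟨v, hv, v', hv', rfl⟩, rfl⟩, ?_⟩
    have hh : h = g * u₂ * v⁻¹ := by
      rw [eq_mul_inv_iff_mul_eq, hcv]
    rw [Prod.mk.injEq]
    refine ⟨rfl, ?_⟩
    rw [hh]
    group

lemma my_coarseGroup_eq (G : Type*) [Group G] :
    coarseGroup G = {e : Set (G × G) | ∃ U : Set G, U.Finite ∧ e ⊆ SatMul U} := by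
  apply Set.Subset.antisymm
  · exact my_genCoarse_subset my_isCoarse_EG
      (by rintro e ⟨U, hU, rfl⟩; exact ⟨U, hU, subset_rfl⟩)
  · rintro e ⟨U, hU, he⟩
    exact my_mem_gen_subset ⟨U, hU, rfl⟩ he

lemma my_key_finite [T2Space X] {φ : G → X → X} (hact : IsActionByHomeos φ)
    (hpd : ProperlyDisc φ) (x₀ : X) {A : Set X} (hA : TopBounded A) :
    ∃ T : Set G, T.Finite ∧
      ∀ a b : G, (φ a x₀, φ b x₀) ∈ Set.diagonal X ∪ Sat φ A → a⁻¹ * b ∈ T := by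
  obtain ⟨hcont, hone, hmul⟩ := hact
  have hcancel : ∀ (g : G) (x : X), φ g⁻¹ (φ g x) = x := fun g x => by
    rw [← hmul, inv_mul_cancel, hone]
  set K := closure A ∪ {x₀} with hK
  have hKc : IsCompact K := hA.union isCompact_singleton
  have hx₀K : x₀ ∈ K := Or.inr rfl
  have hAK : A ⊆ K := subset_closure.trans Set.subset_union_left
  set F := {g : G | (φ g '' K ∩ K).Nonempty} with hFdef
  have hF : F.Finite := hpd K hKc
  have hmemF : ∀ (g : G) (x : X), x ∈ K → φ g x ∈ K → g ∈ F := fun g x hx hgx =>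
    ⟨φ g x, ⟨x, hx, rfl⟩, hgx⟩
  refine ⟨F ∪ Set.image2 (fun a b => a⁻¹ * b) F F, hF.union (hF.image2 _ hF), ?_⟩
  rintro a b (hab | ⟨h, x, hx, x', hx', heq⟩)
  · have hd : φ a x₀ = φ b x₀ := hab
    have h1 : φ (a⁻¹ * b) x₀ = x₀ := by rw [hmul, ← hd, hcancel]
    exact Or.inl (hmemF _ _ hx₀K (by rw [h1]; exact hx₀K))
  · simp only [Prod.mk.injEq] at heq
    obtain ⟨h1, h2⟩ := heq
    have e1 : φ (h⁻¹ * a) x₀ = x := by rw [hmul, h1, hcancel]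
    have e2 : φ (h⁻¹ * b) x₀ = x' := by rw [hmul, h2, hcancel]
    have f1 : h⁻¹ * a ∈ F := hmemF _ _ hx₀K (by rw [e1]; exact hAK hx)
    have f2 : h⁻¹ * b ∈ F := hmemF _ _ hx₀K (by rw [e2]; exact hAK hx')
    refine Or.inr ⟨h⁻¹ * a, f1, h⁻¹ * b, f2, ?_⟩
    group

lemma my_orbit_pairs {φ : G → X → X} (hact : IsActionByHomeos φ) (x₀ : X) {U : Set G}
    {a b : G} (h : (a, b) ∈ SatMul U) :
    (φ a x₀, φ b x₀) ∈ Sat φ ((fun u => φ u x₀) '' U) := by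
  obtain ⟨g, u, hu, u', hu', heq⟩ := h
  simp only [Prod.mk.injEq] at heq
  obtain ⟨rfl, rfl⟩ := heq
  refine ⟨g, φ u x₀, ⟨u, hu, rfl⟩, φ u' x₀, ⟨u', hu', rfl⟩, ?_⟩
  rw [Prod.mk.injEq]
  exact ⟨hact.2.2 g u x₀, hact.2.2 g u' x₀⟩

lemma my_pair_satMul {T : Set G} {a b : G} (h : a⁻¹ * b ∈ T) :
    (a, b) ∈ SatMul ({1} ∪ T) :=
  ⟨a, 1, Or.inl rfl, a⁻¹ * b, Or.inr h, by simp⟩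

lemma my_comp_sat [T2Space X] {φ : G → X → X} (hact : IsActionByHomeos φ)
    (hpd : ProperlyDisc φ) {A B : Set X} (hA : TopBounded A) (hB : TopBounded B) :
    ∃ C : Set X, TopBounded C ∧ compRel (Sat φ A) (Sat φ B) ⊆ Sat φ C := by
  obtain ⟨hcont, hone, hmul⟩ := hact
  have hcancel : ∀ (g : G) (x : X), φ g⁻¹ (φ g x) = x := fun g x => by
    rw [← hmul, inv_mul_cancel, hone]
  set K := closure A ∪ closure B with hKdef
  have hKc : IsCompact K := hA.union hB
  set F := {g : G | (φ g '' K ∩ K).Nonempty} with hFdef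
  have hF : F.Finite := hpd K hKc
  refine ⟨A ∪ ⋃ k ∈ F, φ k '' B, ?_, ?_⟩
  · have hDc : IsCompact (closure A ∪ ⋃ k ∈ F, φ k '' closure B) :=
      hA.union (hF.isCompact_biUnion fun k _ => hB.image (hcont k))
    have hDcl : IsClosed (closure A ∪ ⋃ k ∈ F, φ k '' closure B) :=
      isClosed_closure.union (hF.isClosed_biUnion fun k _ => (hB.image (hcont k)).isClosed)
    have hsub : A ∪ ⋃ k ∈ F, φ k '' B ⊆ closure A ∪ ⋃ k ∈ F, φ k '' closure B :=
      Set.union_subset_union subset_closure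
        (Set.iUnion₂_mono fun k _ => Set.image_mono subset_closure)
    exact hDc.of_isClosed_subset isClosed_closure (closure_minimal hsub hDcl)
  · rintro ⟨p1, p2⟩ ⟨c, ⟨g, x, hx, x', hx', heq1⟩, ⟨h, y, hy, y', hy', heq2⟩⟩
    simp only [Prod.mk.injEq] at heq1 heq2
    obtain ⟨rfl, rfl⟩ := heq1
    obtain ⟨hcy, rfl⟩ := heq2
    have hk : φ (g⁻¹ * h) y = x' := by rw [hmul, ← hcy, hcancel]
    have hkF : g⁻¹ * h ∈ F :=
      ⟨x', ⟨y, Or.inr (subset_closure hy), hk⟩, Or.inl (subset_closure hx')⟩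
    have hb : φ h y' = φ g (φ (g⁻¹ * h) y') := by rw [← hmul, mul_inv_cancel_left]
    refine ⟨g, x, Or.inl hx, φ (g⁻¹ * h) y',
      Or.inr (Set.mem_biUnion hkF ⟨y', hy', rfl⟩), ?_⟩
    rw [Prod.mk.injEq]
    exact ⟨rfl, hb⟩

lemma my_isCoarse_EPhi [T2Space X] {φ : G → X → X} (hact : IsActionByHomeos φ)
    (hpd : ProperlyDisc φ) :
    IsCoarseStructure
      {e : Set (X × X) | ∃ A : Set X, TopBounded A ∧ e ⊆ Set.diagonal X ∪ Sat φ A} := by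
  refine ⟨⟨∅, my_topBounded_empty, Set.subset_union_left⟩, ?_, ?_, ?_, ?_⟩
  · rintro e ⟨A, hA, he⟩ e' h
    exact ⟨A, hA, h.trans he⟩
  · rintro e ⟨A, hA, he⟩ e' ⟨B, hB, he'⟩
    exact ⟨A ∪ B, my_topBounded_union hA hB,
      Set.union_subset
        (he.trans (Set.union_subset_union_right _ (my_sat_mono φ Set.subset_union_left)))
        (he'.trans (Set.union_subset_union_right _ (my_sat_mono φ Set.subset_union_right)))⟩
  · rintro e ⟨A, hA, he⟩
    refine ⟨A, hA, ?_⟩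
    rintro ⟨a, b⟩ hab
    rcases he hab with h | h
    · have hd : b = a := h
      exact Or.inl hd.symm
    · obtain ⟨g, x, hx, x', hx', heq⟩ := h
      simp only [Prod.mk.injEq] at heq
      refine Or.inr ⟨g, x', hx', x, hx, ?_⟩
      rw [Prod.mk.injEq]
      exact ⟨heq.2, heq.1⟩
  · rintro e ⟨A, hA, he⟩ e' ⟨B, hB, he'⟩
    obtain ⟨C, hC, hcomp⟩ := my_comp_sat ⟨hact.1, hact.2.1, hact.2.2⟩ hpd hA hB
    refine ⟨A ∪ B ∪ C, my_topBounded_union (my_topBounded_union hA hB) hC, ?_⟩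
    have hAsub : A ⊆ A ∪ B ∪ C := Set.subset_union_left.trans Set.subset_union_left
    have hBsub : B ⊆ A ∪ B ∪ C := Set.subset_union_right.trans Set.subset_union_left
    rintro ⟨a, b⟩ ⟨c, h1, h2⟩
    rcases he h1 with hd1 | hs1 <;> rcases he' h2 with hd2 | hs2
    · have e1 : a = c := hd1
      have e2 : c = b := hd2
      exact Or.inl (show a = b from e1.trans e2)
    · have e1 : a = c := hd1
      refine Or.inr (my_sat_mono φ hBsub ?_)
      rw [show ((a, b) : X × X) = (c, b) from by rw [e1]]
      exact hs2
    · have e2 : c = b := hd2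
      refine Or.inr (my_sat_mono φ hAsub ?_)
      rw [show ((a, b) : X × X) = (a, c) from by rw [e2]]
      exact hs1
    · exact Or.inr (my_sat_mono φ Set.subset_union_right (hcomp ⟨c, hs1, hs2⟩))

lemma my_coarseOfAction_eq [T2Space X] {φ : G → X → X} (hact : IsActionByHomeos φ)
    (hpd : ProperlyDisc φ) :
    coarseOfAction φ =
      {e : Set (X × X) | ∃ A : Set X, TopBounded A ∧ e ⊆ Set.diagonal X ∪ Sat φ A} := by
  apply Set.Subset.antisymm
  · exact my_genCoarse_subset (my_isCoarse_EPhi hact hpd)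
      (by rintro e ⟨A, hA, rfl⟩; exact ⟨A, hA, Set.subset_union_right⟩)
  · rintro e ⟨A, hA, he⟩
    exact my_mem_gen_union ⟨A, hA, rfl⟩ he

end MyAux

/-- the orbit map `g ↦ φ(g, x₀)` is a coarse embedding
`(G, ε_G) → (X, ε_φ)`. -/
theorem stmt8 {G X : Type*} [Group G] [TopologicalSpace X] [T2Space X]
    [LocallyCompactSpace X] [ParacompactSpace X]
    (φ : G → X → X) (hact : IsActionByHomeos φ) (hpd : ProperlyDisc φ) (x₀ : X) :
    CoarseEmbedding (coarseGroup G) (coarseOfAction φ) (fun g => φ g x₀) := by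
  classical
  have hEG := my_coarseGroup_eq G
  have hEφ := my_coarseOfAction_eq hact hpd
  set f : G → X := fun g => φ g x₀ with hf
  have mBorn : ∀ e ∈ coarseGroup G, Prod.map f f '' e ∈ coarseOfAction φ := by
    intro e he
    rw [hEG] at he
    obtain ⟨U, hU, hsub⟩ := he
    rw [hEφ]
    refine ⟨(fun u => φ u x₀) '' U, my_topBounded_finite (hU.image _), ?_⟩
    rintro p ⟨⟨a, b⟩, hab, rfl⟩
    exact Or.inr (my_orbit_pairs hact x₀ (hsub hab))
  have mProper : ∀ B : Set X, B ×ˢ B ∈ coarseOfAction φ →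
      (f ⁻¹' B) ×ˢ (f ⁻¹' B) ∈ coarseGroup G := by
    intro B hB
    rw [hEφ] at hB
    obtain ⟨A, hA, hsub⟩ := hB
    obtain ⟨T, hT, hkey⟩ := my_key_finite hact hpd x₀ hA
    rw [hEG]
    refine ⟨{1} ∪ T, (Set.finite_singleton 1).union hT, ?_⟩
    rintro ⟨a, b⟩ ⟨ha, hb⟩
    exact my_pair_satMul (hkey a b (hsub (Set.mk_mem_prod ha hb)))
  set σ : ↥(Set.range f) → G := fun y => (Set.mem_range.mp y.2).choose with hσdef
  have hσspec : ∀ y : ↥(Set.range f), f (σ y) = (y : X) :=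
    fun y => (Set.mem_range.mp y.2).choose_spec
  have hιprod : ∀ B : Set ↥(Set.range f),
      Prod.map (Subtype.val) (Subtype.val) '' (B ×ˢ B)
        = (Subtype.val '' B) ×ˢ (Subtype.val '' B) := by
    intro B
    ext ⟨x, y⟩
    constructor
    · rintro ⟨⟨u, v⟩, ⟨hu, hv⟩, heq⟩
      simp only [Prod.map_apply, Prod.mk.injEq] at heq
      obtain ⟨rfl, rfl⟩ := heq
      exact ⟨⟨u, hu, rfl⟩, ⟨v, hv, rfl⟩⟩
    · rintro ⟨⟨u, hu, rfl⟩, ⟨v, hv, rfl⟩⟩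
      exact ⟨(u, v), ⟨hu, hv⟩, rfl⟩
  have bornHat : Bornologous (coarseGroup G) (SubCoarse (coarseOfAction φ) (Set.range f))
      (Set.rangeFactorization f) := by
    intro e he
    show Prod.map _ _ '' (Prod.map _ _ '' e) ∈ coarseOfAction φ
    rw [Set.image_image]
    exact mBorn e he
  have propHat : CProper (coarseGroup G) (SubCoarse (coarseOfAction φ) (Set.range f))
      (Set.rangeFactorization f) := by
    intro B hB
    have hB' : (Subtype.val '' B) ×ˢ (Subtype.val '' B) ∈ coarseOfAction φ := by
      rw [← hιprod B]; exact hB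
    have hpre : Set.rangeFactorization f ⁻¹' B = f ⁻¹' (Subtype.val '' B) := by
      ext a
      constructor
      · intro ha; exact ⟨Set.rangeFactorization f a, ha, rfl⟩
      · rintro ⟨y, hy, hval⟩
        have hy2 : y = Set.rangeFactorization f a := Subtype.ext hval
        show Set.rangeFactorization f a ∈ B
        rw [← hy2]; exact hy
    show _ ×ˢ _ ∈ coarseGroup G
    rw [hpre]
    exact mProper _ hB'
  have bornσ : Bornologous (SubCoarse (coarseOfAction φ) (Set.range f)) (coarseGroup G)
      σ := by
    intro e he
    have hE : Prod.map Subtype.val Subtype.val '' e ∈ coarseOfAction φ := he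
    rw [hEφ] at hE
    obtain ⟨A, hA, hsub⟩ := hE
    obtain ⟨T, hT, hkey⟩ := my_key_finite hact hpd x₀ hA
    rw [hEG]
    refine ⟨{1} ∪ T, (Set.finite_singleton 1).union hT, ?_⟩
    rintro p ⟨⟨y, y'⟩, hyy, rfl⟩
    apply my_pair_satMul
    apply hkey
    have hmem : ((y : X), (y' : X)) ∈ Set.diagonal X ∪ Sat φ A :=
      hsub ⟨(y, y'), hyy, rfl⟩
    rwa [← hσspec y, ← hσspec y'] at hmem
  have propσ : CProper (SubCoarse (coarseOfAction φ) (Set.range f)) (coarseGroup G)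
      σ := by
    intro B hB
    have hB' : (B ×ˢ B : Set (G × G)) ∈ coarseGroup G := hB
    rw [hEG] at hB'
    obtain ⟨U, hU, hsub⟩ := hB'
    show Prod.map _ _ '' ((σ ⁻¹' B) ×ˢ (σ ⁻¹' B)) ∈ coarseOfAction φ
    rw [hEφ]
    refine ⟨(fun u => φ u x₀) '' U, my_topBounded_finite (hU.image _), ?_⟩
    rintro p ⟨⟨y, y'⟩, ⟨hy, hy'⟩, rfl⟩
    right
    have horb := my_orbit_pairs hact x₀ (hsub (Set.mk_mem_prod hy hy'))
    rwa [show φ (σ y) x₀ = (y : X) from hσspec y,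
      show φ (σ y') x₀ = (y' : X) from hσspec y'] at horb
  have close1 : Close (SubCoarse (coarseOfAction φ) (Set.range f))
      (Set.rangeFactorization f ∘ σ) id := by
    show Prod.map _ _ '' Set.range _ ∈ coarseOfAction φ
    rw [hEφ]
    refine ⟨∅, my_topBounded_empty, ?_⟩
    rintro p ⟨q, ⟨y, rfl⟩, rfl⟩
    left
    show f (σ y) = (y : X)
    exact hσspec y
  have close2 : Close (coarseGroup G) (σ ∘ Set.rangeFactorization f) id := by
    obtain ⟨T₀, hT₀, hkey₀⟩ := my_key_finite hact hpd x₀ (my_topBounded_empty (X := X))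
    rw [hEG]
    refine ⟨{1} ∪ T₀, (Set.finite_singleton 1).union hT₀, ?_⟩
    rintro p ⟨g, rfl⟩
    apply my_pair_satMul
    apply hkey₀
    left
    show φ (σ (Set.rangeFactorization f g)) x₀ = φ g x₀
    exact hσspec (Set.rangeFactorization f g)
  exact ⟨⟨fun e he => mBorn e he, fun B hB => mProper B hB⟩,
    ⟨bornHat, propHat⟩, σ, ⟨bornσ, propσ⟩, close1, close2⟩

end Paper
end

section
/- Let G be a countable group, X a Hausdorff locally compact space with countable basis, φ : G ↷ X a properly discontinuous and cocompact action by homeomorphisms, K ⊆ X a fundamental domain (a compact set with φ(G, K) = X), and x₀ ∈ X. Let X +_f W be a metrizable Hausdorff compactification of X to which φ extends continuously and which is group-theoretically perspective. Then for every subset F ⊆ G, f(Cl_X({φ(g, x₀) : g ∈ F})) = f(Cl_X({φ(g, k) : g ∈ F, k ∈ K})); that is, the pullback of f along the orbit map g ↦ φ(g, x₀) coincides with the map f_Λ(F) = f(φ(F, K)). -/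
namespace Paper

open Set Topology

section AuxAW

variable {X W : Type*} [TopologicalSpace X] [TopologicalSpace W]

lemma adm_mono {f : Set X → Set W} (hf : Admissible f) {A B : Set X}
    (hA : IsClosed A) (hB : IsClosed B) (hAB : A ⊆ B) : f A ⊆ f B := by
  have h := hf.2.1 A B hA hB
  rw [Set.union_eq_self_of_subset_left hAB] at h
  rw [h]
  exact Set.subset_union_left

lemma awClosed_empty {f : Set X → Set W} (hf : Admissible f) :
    (∅ : Set (X ⊕ W)) ∈ AWClosed f := by
  refine ⟨by simp, by simp, ?_⟩
  simp [hf.2.2]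

lemma awClosed_union {f : Set X → Set W} (hf : Admissible f) {C D : Set (X ⊕ W)}
    (hC : C ∈ AWClosed f) (hD : D ∈ AWClosed f) : C ∪ D ∈ AWClosed f := by
  refine ⟨by rw [Set.preimage_union]; exact hC.1.union hD.1,
    by rw [Set.preimage_union]; exact hC.2.1.union hD.2.1, ?_⟩
  rw [Set.preimage_union, hf.2.1 _ _ hC.1 hD.1, Set.image_union]
  exact Set.union_subset_union hC.2.2 hD.2.2

lemma awClosed_sInter {f : Set X → Set W} (hf : Admissible f) {S : Set (Set (X ⊕ W))}
    (hS : S ⊆ AWClosed f) : ⋂₀ S ∈ AWClosed f := by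
  have hpre : (Sum.inl ⁻¹' ⋂₀ S : Set X) = ⋂ C ∈ S, Sum.inl ⁻¹' C := by
    ext x; simp
  have hclosed : IsClosed (Sum.inl ⁻¹' ⋂₀ S : Set X) := by
    rw [hpre]; exact isClosed_biInter fun C hC => (hS hC).1
  refine ⟨hclosed, ?_, ?_⟩
  · have : (Sum.inr ⁻¹' ⋂₀ S : Set W) = ⋂ C ∈ S, Sum.inr ⁻¹' C := by ext x; simp
    rw [this]; exact isClosed_biInter fun C hC => (hS hC).2.1
  · intro y hy
    rw [Set.mem_sInter]
    intro C hC
    have hsub : (Sum.inl ⁻¹' ⋂₀ S : Set X) ⊆ Sum.inl ⁻¹' C :=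
      Set.preimage_mono (Set.sInter_subset_of_mem hC)
    have him : Sum.inr '' f (Sum.inl ⁻¹' ⋂₀ S) ⊆ (Sum.inr '' f (Sum.inl ⁻¹' C) : Set (X ⊕ W)) :=
      Set.image_mono (f := (Sum.inr : W → X ⊕ W)) (adm_mono hf hclosed (hS hC).1 hsub)
    exact (hS hC).2.2 (him hy)

lemma isOpen_aw_iff {f : Set X → Set W} (hf : Admissible f) {s : Set (X ⊕ W)} :
    IsOpen[AWTop f] s ↔ sᶜ ∈ AWClosed f := by
  constructor
  · intro h
    induction h with
    | basic u hu =>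
        obtain ⟨C, hC, rfl⟩ := hu
        simpa using hC
    | univ => simpa using awClosed_empty hf
    | inter u v hu hv ihu ihv =>
        rw [Set.compl_inter]
        exact awClosed_union hf ihu ihv
    | sUnion S hS ih =>
        rw [Set.compl_sUnion]
        exact awClosed_sInter hf (by rintro _ ⟨t, ht, rfl⟩; exact ih t ht)
  · intro h
    exact TopologicalSpace.GenerateOpen.basic _ ⟨sᶜ, h, compl_compl s⟩

lemma isClosed_aw_iff {f : Set X → Set W} (hf : Admissible f) {C : Set (X ⊕ W)} :
    IsClosed[AWTop f] C ↔ C ∈ AWClosed f := by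
  have h1 := @isOpen_compl_iff (X ⊕ W) C (AWTop f)
  rw [isOpen_aw_iff hf, compl_compl] at h1
  exact h1.symm

lemma mem_f_closure {f : Set X → Set W} (hf : Admissible f) (A : Set X) (w : W) :
    w ∈ f (closure A) ↔ Sum.inr w ∈ @closure _ (AWTop f) (Sum.inl '' A) := by
  letI := AWTop f
  set Ccl := @closure _ (AWTop f) (Sum.inl '' A) with hCcl
  have hC : Ccl ∈ AWClosed f := (isClosed_aw_iff hf).mp isClosed_closure
  have hsub0 : A ⊆ Sum.inl ⁻¹' Ccl := fun x hx =>
    subset_closure (Set.mem_image_of_mem _ hx)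
  have hsub : closure A ⊆ Sum.inl ⁻¹' Ccl := closure_minimal hsub0 hC.1
  constructor
  · intro hw
    have : w ∈ f (Sum.inl ⁻¹' Ccl) := adm_mono hf isClosed_closure hC.1 hsub hw
    exact hC.2.2 (Set.mem_image_of_mem _ this)
  · intro hw
    set C₀ : Set (X ⊕ W) := Sum.inl '' closure A ∪ Sum.inr '' f (closure A) with hC₀def
    have hpre : (Sum.inl ⁻¹' C₀ : Set X) = closure A := by
      ext x
      simp [hC₀def, Sum.inl_injective.mem_set_image]
    have hpre' : (Sum.inr ⁻¹' C₀ : Set W) = f (closure A) := by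
      ext y
      simp [hC₀def, Sum.inr_injective.mem_set_image]
    have hC₀ : C₀ ∈ AWClosed f := by
      refine ⟨?_, ?_, ?_⟩
      · rw [hpre]; exact isClosed_closure
      · rw [hpre']; exact hf.1 _ isClosed_closure
      · rw [hpre]; exact Set.subset_union_right
    have hcl : Ccl ⊆ C₀ := closure_minimal
      (fun p hp => Set.mem_union_left _ (Set.image_mono subset_closure hp))
      ((isClosed_aw_iff hf).mpr hC₀)
    rcases hcl hw with h | h
    · obtain ⟨x, -, hx⟩ := h
      exact absurd hx (by simp)
    · obtain ⟨y, hy, hyw⟩ := h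
      rwa [← Sum.inr_injective hyw]

end AuxAW

/-- for a metrizable group-theoretically perspective equivariant
compactification `X +_f W`, the pullback of `f` along the orbit map `g ↦ φ(g, x₀)`
coincides with `f_Λ(F) = f(φ(F, K))`: for every `F ⊆ G`,
`f(Cl_X {φ(g,x₀) : g ∈ F}) = f(Cl_X {φ(g,k) : g ∈ F, k ∈ K})`. -/
theorem stmt11 {G X W : Type*} [Group G] [Countable G] [TopologicalSpace X] [T2Space X]
    [LocallyCompactSpace X] [SecondCountableTopology X] [TopologicalSpace W]
    (φ : G → X → X) (hact : IsActionByHomeos φ) (hpd : ProperlyDisc φ)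
    (K : Set X) (hK : IsCompact K) (hKfd : (⋃ g : G, φ g '' K) = Set.univ)
    (x₀ : X)
    (f : Set X → Set W) (hcomp : IsCompactification f)
    (hmetr : @TopologicalSpace.MetrizableSpace (X ⊕ W) (AWTop f))
    (Φ : G → (X ⊕ W) → (X ⊕ W))
    (hΦcont : ∀ g : G, Continuous[AWTop f, AWTop f] (Φ g))
    (hΦone : ∀ p : X ⊕ W, Φ 1 p = p)
    (hΦmul : ∀ g h : G, ∀ p : X ⊕ W, Φ (g * h) p = Φ g (Φ h p))
    (hext : ∀ (g : G) (x : X), Φ g (Sum.inl x) = Sum.inl (φ g x))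
    (hpers : GTPerspective φ f) :
    ∀ F : Set G,
      f (closure ((fun g => φ g x₀) '' F)) = f (closure (⋃ g ∈ F, φ g '' K)) := by
  intro F
  have hf : Admissible f := hcomp.1
  obtain ⟨g₀, k₀, hk₀K, -⟩ : ∃ g₀ k₀, k₀ ∈ K ∧ φ g₀ k₀ = x₀ := by
    have hx : x₀ ∈ ⋃ g : G, φ g '' K := hKfd ▸ Set.mem_univ x₀
    simpa [eq_comm] using hx
  have hK'c : IsCompact (insert x₀ K) := hK.insert x₀
  letI := AWTop f
  ext w
  rw [mem_f_closure hf, mem_f_closure hf, mem_closure_iff, mem_closure_iff]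
  constructor
  · intro h U hU hwU
    obtain ⟨V, hVopen, hwV, hVU, hprop⟩ := hpers (insert x₀ K) hK'c w U hU hwU
    obtain ⟨p, hpV, hpA⟩ := h V hVopen hwV
    obtain ⟨y, hy, rfl⟩ := hpA
    obtain ⟨g, hgF, rfl⟩ := hy
    refine ⟨Sum.inl (φ g k₀),
      hprop g ⟨x₀, Set.mem_insert _ _, hpV⟩ k₀ (Set.mem_insert_of_mem _ hk₀K), ?_⟩
    exact Set.mem_image_of_mem _
      (Set.mem_biUnion hgF (Set.mem_image_of_mem _ hk₀K))
  · intro h U hU hwU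
    obtain ⟨V, hVopen, hwV, hVU, hprop⟩ := hpers (insert x₀ K) hK'c w U hU hwU
    obtain ⟨p, hpV, hpA⟩ := h V hVopen hwV
    obtain ⟨y, hy, rfl⟩ := hpA
    simp only [Set.mem_iUnion] at hy
    obtain ⟨g, hgF, k, hkK, rfl⟩ := hy
    refine ⟨Sum.inl (φ g x₀),
      hprop g ⟨k, Set.mem_insert_of_mem _ hkK, hpV⟩ x₀ (Set.mem_insert _ _), ?_⟩
    exact Set.mem_image_of_mem _ ⟨g, hgF, rfl⟩

end Paper
end
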